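/- If b* is an integer with −1 ≤ 2b* − B sinθ ≤ 1 (so that the anchor subcarrier direction is within half a subcarrier of sinθ), then the beamforming gain F_N(π(2b*/B − sinθ)) is at least F_N evaluated at π/B; in particular when N ≤ B the anchor subcarrier gain is at least F_N(π/B) = (sin(Nπ/(2B))/sin(π/(2B)))². -/

import Mathlib

/-- Fejér kernel, extended by continuity (value `N²`) where `sin (x/2) = 0`. -/
noncomputable def fejer (N : ℕ) (x : ℝ) : ℝ :=
  if Real.sin (x / 2) = 0 then (N : ℝ) ^ 2
  else (Real.sin (N * x / 2) / Real.sin (x / 2)) ^ 2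

open Real Finset

lemma dirichlet (x : ℝ) (N : ℕ) :
    Real.sin (x/2) * (1 + 2 * ∑ j ∈ Finset.range N, Real.cos (((j:ℝ)+1)*x))
      = Real.sin ((2*N+1)*x/2) := by
  induction N with
  | zero => norm_num
  | succ n ih =>
    rw [Finset.sum_range_succ]
    have key : 2 * Real.sin (x/2) * Real.cos (((n:ℝ)+1)*x)
        = Real.sin ((2*(n+1)+1)*x/2) - Real.sin ((2*n+1)*x/2) := by
      have h1 := Real.sin_add (((n:ℝ)+1)*x) (x/2)
      have h2 := Real.sin_sub (((n:ℝ)+1)*x) (x/2)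
      have e1 : ((n:ℝ)+1)*x + x/2 = (2*((n:ℝ)+1)+1)*x/2 := by ring
      have e2 : ((n:ℝ)+1)*x - x/2 = (2*(n:ℝ)+1)*x/2 := by ring
      rw [e1] at h1; rw [e2] at h2
      linarith
    push_cast
    push_cast at ih
    nlinarith [ih, key]

lemma reflect_sum (x : ℝ) (N : ℕ) :
    ∑ j ∈ Finset.range N, Real.cos (((N:ℝ)-j)*x)
      = ∑ j ∈ Finset.range N, Real.cos (((j:ℝ)+1)*x) := by
  induction N with
  | zero => simp
  | succ n ih =>
    push_cast
    rw [Finset.sum_range_succ' (fun j => Real.cos (((n:ℝ)+1-j)*x)), Finset.sum_range_succ]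
    push_cast
    have : ∀ j : ℕ, ((n:ℝ)+1-((j:ℝ)+1))*x = ((n:ℝ)-j)*x := by intro j; ring
    simp only [this]
    rw [ih]
    norm_num

lemma key_identity (x : ℝ) (N : ℕ) :
    Real.sin (x/2)^2 * ∑ j ∈ Finset.range N, ∑ k ∈ Finset.range N,
        Real.cos (((j:ℝ)-k)*x) = Real.sin ((N:ℝ)*x/2)^2 := by
  induction N with
  | zero => simp
  | succ n ih =>
    have h1 : ∑ j ∈ Finset.range n, Real.cos (((j:ℝ)-(n:ℝ))*x)
        = ∑ j ∈ Finset.range n, Real.cos (((n:ℝ)-j)*x) :=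
      Finset.sum_congr rfl (fun j _ => by rw [← Real.cos_neg (((j:ℝ)-(n:ℝ))*x)]; ring_nf)
    have expand : ∑ j ∈ Finset.range (n+1), ∑ k ∈ Finset.range (n+1),
        Real.cos (((j:ℝ)-k)*x)
        = (∑ j ∈ Finset.range n, ∑ k ∈ Finset.range n, Real.cos (((j:ℝ)-k)*x))
          + (1 + 2 * ∑ j ∈ Finset.range n, Real.cos (((n:ℝ)-j)*x)) := by
      simp only [Finset.sum_range_succ, Finset.sum_add_distrib]
      rw [h1]
      push_cast
      simp only [sub_self, zero_mul, Real.cos_zero]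
      ring
    rw [expand, mul_add, ih]
    have hd : Real.sin (x/2) * (1 + 2 * ∑ j ∈ Finset.range n, Real.cos (((n:ℝ)-j)*x))
        = Real.sin ((2*n+1)*x/2) := by rw [reflect_sum]; exact dirichlet x n
    have hd2 : Real.sin (x/2)^2 * (1 + 2 * ∑ j ∈ Finset.range n, Real.cos (((n:ℝ)-j)*x))
        = Real.sin ((2*(n:ℝ)+1)*x/2) * Real.sin (x/2) := by
      rw [pow_two, mul_assoc, hd]; push_cast; ring
    have htrig : Real.sin (((n:ℝ)+1)*x/2)^2 - Real.sin ((n:ℝ)*x/2)^2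
        = Real.sin ((2*(n:ℝ)+1)*x/2) * Real.sin (x/2) := by
      have hA := Real.sin_sq_eq_half_sub (((n:ℝ)+1)*x/2)
      have hB := Real.sin_sq_eq_half_sub ((n:ℝ)*x/2)
      have hc : Real.cos (2*((n:ℝ)*x/2)) - Real.cos (2*(((n:ℝ)+1)*x/2))
          = 2 * Real.sin ((2*(n:ℝ)+1)*x/2) * Real.sin (x/2) := by
        rw [Real.cos_sub_cos (2*((n:ℝ)*x/2)) (2*(((n:ℝ)+1)*x/2))]
        have e5 : (2*((n:ℝ)*x/2) + 2*(((n:ℝ)+1)*x/2))/2 = (2*(n:ℝ)+1)*x/2 := by ring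
        have e6 : (2*((n:ℝ)*x/2) - 2*(((n:ℝ)+1)*x/2))/2 = -(x/2) := by ring
        rw [e5, e6, Real.sin_neg]
        ring
      linarith
    push_cast
    linarith [hd2, htrig]

lemma fejer_eq_sum (N : ℕ) (x : ℝ) :
    fejer N x = ∑ j ∈ Finset.range N, ∑ k ∈ Finset.range N, Real.cos (((j:ℝ)-k)*x) := by
  unfold fejer
  by_cases hs : Real.sin (x/2) = 0
  · rw [if_pos hs]
    obtain ⟨m, hm⟩ := Real.sin_eq_zero_iff.mp hs
    have hx : x = m * (2*Real.pi) := by linarith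
    have : ∀ j ∈ Finset.range N, ∀ k ∈ Finset.range N,
        Real.cos (((j:ℝ)-k)*x) = 1 := by
      intro j _ k _
      rw [hx]
      have : ((j:ℝ)-k) * ((m:ℝ) * (2*Real.pi)) = ((((j:ℤ)-k)*m : ℤ) : ℝ) * (2*Real.pi) := by
        push_cast; ring
      rw [this, Real.cos_int_mul_two_pi]
    rw [Finset.sum_congr rfl (fun j hj => Finset.sum_congr rfl (fun k hk => this j hj k hk))]
    simp
    ring
  · rw [if_neg hs]
    have := key_identity x N
    have hs2 : Real.sin (x/2)^2 ≠ 0 := pow_ne_zero 2 hs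
    field_simp
    have e : ∀ j k : ℕ, Real.cos (x * ((j:ℝ) - k)) = Real.cos (((j:ℝ)-k)*x) := fun j k => by rw [mul_comm]
    simp only [e]
    linarith [key_identity x N]

lemma fejer_anti (N : ℕ) (hN : 1 ≤ N) (a b : ℝ) (h0 : 0 ≤ a) (hab : a ≤ b)
    (hbN : b ≤ Real.pi / N) : fejer N b ≤ fejer N a := by
  have hb0 : 0 ≤ b := le_trans h0 hab
  rw [fejer_eq_sum, fejer_eq_sum]
  apply Finset.sum_le_sum
  intro j hj
  apply Finset.sum_le_sum
  intro k hk
  have hjN : j ≤ N - 1 := Nat.le_sub_one_of_lt (Finset.mem_range.mp hj)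
  have hkN : k ≤ N - 1 := Nat.le_sub_one_of_lt (Finset.mem_range.mp hk)
  have hd : |(j:ℝ) - k| ≤ (N:ℝ) - 1 := by
    rw [abs_sub_le_iff]
    constructor
    · have : (j:ℝ) ≤ (N:ℝ) - 1 := by
        have := Nat.cast_le (α := ℝ) |>.mpr hjN
        rw [Nat.cast_sub hN] at this; simpa using this
      linarith [Nat.cast_nonneg (α := ℝ) k]
    · have : (k:ℝ) ≤ (N:ℝ) - 1 := by
        have := Nat.cast_le (α := ℝ) |>.mpr hkN
        rw [Nat.cast_sub hN] at this; simpa using this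
      linarith [Nat.cast_nonneg (α := ℝ) j]
  set d := |(j:ℝ) - k| with hdef
  have hd0 : 0 ≤ d := abs_nonneg _
  have hcosa : Real.cos (((j:ℝ)-k)*a) = Real.cos (d*a) := by
    rcases abs_cases ((j:ℝ)-k) with ⟨h, _⟩ | ⟨h, _⟩
    · rw [hdef, h]
    · rw [hdef, h, ← Real.cos_neg (((j:ℝ)-k)*a)]; ring_nf
  have hcosb : Real.cos (((j:ℝ)-k)*b) = Real.cos (d*b) := by
    rcases abs_cases ((j:ℝ)-k) with ⟨h, _⟩ | ⟨h, _⟩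
    · rw [hdef, h]
    · rw [hdef, h, ← Real.cos_neg (((j:ℝ)-k)*b)]; ring_nf
  rw [hcosa, hcosb]
  apply Real.cos_le_cos_of_nonneg_of_le_pi
  · positivity
  · have hNpos : (0:ℝ) < N := by exact_mod_cast Nat.pos_of_ne_zero (by omega)
    have h1 : d * b ≤ ((N:ℝ) - 1) * (Real.pi / N) := by
      apply mul_le_mul hd hbN hb0
      linarith
    have h2 : ((N:ℝ) - 1) * (Real.pi / N) ≤ Real.pi := by
      rw [div_eq_mul_inv, ← mul_assoc]
      have : ((N:ℝ) - 1) * Real.pi ≤ (N:ℝ) * Real.pi := by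
        nlinarith [Real.pi_pos]
      calc ((N:ℝ)-1) * Real.pi * (N:ℝ)⁻¹ ≤ (N:ℝ) * Real.pi * (N:ℝ)⁻¹ := by
            apply mul_le_mul_of_nonneg_right this (by positivity)
        _ = Real.pi := by field_simp
    linarith
  · exact mul_le_mul_of_nonneg_left hab hd0

lemma fejer_neg (N : ℕ) (x : ℝ) : fejer N (-x) = fejer N x := by
  rw [fejer_eq_sum, fejer_eq_sum]
  apply Finset.sum_congr rfl
  intro j _
  apply Finset.sum_congr rfl
  intro k _
  rw [← Real.cos_neg (((j:ℝ)-k)*x)]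
  ring_nf

/-- The anchor subcarrier gain is at least `F_N(π/B)`. -/
theorem anchor_gain_ge (N B : ℕ) (hN : 1 ≤ N) (hNB : N ≤ B)
    (θ : ℝ) (hθ : θ ∈ Set.Ioo (-(Real.pi / 2)) (Real.pi / 2))
    (bstar : ℤ) (hb : |2 * (bstar : ℝ) - B * Real.sin θ| ≤ 1) :
    fejer N (Real.pi / B) ≤ fejer N (Real.pi * (2 * (bstar : ℝ) / B - Real.sin θ)) := by
  have hB1 : 1 ≤ B := le_trans hN hNB
  have hBpos : (0:ℝ) < B := by exact_mod_cast Nat.pos_of_ne_zero (by omega)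
  have hNpos : (0:ℝ) < N := by exact_mod_cast Nat.pos_of_ne_zero (by omega)
  set x := Real.pi * (2 * (bstar : ℝ) / B - Real.sin θ) with hx
  have hxb : |x| ≤ Real.pi / B := by
    have : x = Real.pi / B * (2 * (bstar : ℝ) - B * Real.sin θ) := by
      rw [hx]; field_simp
    rw [this, abs_mul, abs_of_pos (by positivity : (0:ℝ) < Real.pi / B)]
    calc Real.pi / B * |2 * (bstar : ℝ) - B * Real.sin θ|
        ≤ Real.pi / B * 1 := by
          apply mul_le_mul_of_nonneg_left hb (by positivity)
      _ = Real.pi / B := mul_one _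
  have hBN : Real.pi / B ≤ Real.pi / N :=
    div_le_div_of_nonneg_left Real.pi_pos.le hNpos (by exact_mod_cast hNB)
  have key : fejer N (Real.pi / B) ≤ fejer N |x| := by
    apply fejer_anti N hN |x| (Real.pi / B) (abs_nonneg _) hxb hBN
  rcases abs_cases x with ⟨h, _⟩ | ⟨h, _⟩
  · rwa [h] at key
  · rw [h] at key; rwa [fejer_neg] at key
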